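/- Let J₀ and J₁ be nonempty finite types, J = J₀ ⊕ J₁, and let ρ : Matrix (Fin 2 × J) (Fin 2 × J) ℂ be positive semidefinite with trace 1, satisfying the sector support condition: ρ ((k,σ),(l,τ)) = 0 unless σ lies in the J_k-component of J and τ lies in the J_l-component of J. Then ρ can be written as a finite convex combination ρ = ∑_t λ_t v_t v_tᴴ of rank-one projections onto unit vectors v_t : Fin 2 × J → ℂ each supported in a single sector {(k, σ) : σ ∈ J_k} for some k ∈ Fin 2, if and only if all off-diagonal entries vanish: ρ ((0,σ),(1,τ)) = 0 for all σ, τ ∈ J. -/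

import Mathlib

open scoped BigOperators ComplexOrder

/-- `σ : J₀ ⊕ J₁` lies in the `J_k`-component, for `k : Fin 2`. -/
def inSector {J₀ J₁ : Type*} (k : Fin 2) (σ : J₀ ⊕ J₁) : Prop :=
  match σ with
  | .inl _ => k = 0
  | .inr _ => k = 1

lemma psd_decomp {I : Type*} [Fintype I] [DecidableEq I] (A : Matrix I I ℂ) (hA : A.PosSemidef) :
    ∃ (μ : I → ℝ) (w : I → I → ℂ),
      (∀ i, 0 ≤ μ i) ∧ (((∑ i, μ i : ℝ) : ℂ) = A.trace) ∧
      (∀ i, ∑ a, Complex.normSq (w i a) = 1) ∧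
      (∀ i a, μ i ≠ 0 → (∀ b, A a b = 0) → w i a = 0) ∧
      A = ∑ i, (μ i : ℂ) • Matrix.of (fun a b => w i a * starRingEnd ℂ (w i b)) := by
  have hH := hA.isHermitian
  set u : I → I → ℂ := fun i => ⇑(hH.eigenvectorBasis i) with hu
  have key : ∀ a b, A a b = ∑ j, (hH.eigenvalues j : ℂ) * (u j a * starRingEnd ℂ (u j b)) := by
    intro a b
    conv_lhs => rw [hH.spectral_theorem, Unitary.conjStarAlgAut_apply]
    rw [Matrix.mul_apply]
    refine Finset.sum_congr rfl fun j _ => ?_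
    rw [Matrix.mul_diagonal]
    rw [Matrix.star_eq_conjTranspose, Matrix.conjTranspose_apply]
    simp only [Function.comp, Matrix.IsHermitian.eigenvectorUnitary_apply, hu, RCLike.star_def]
    rw [mul_right_comm, mul_comm]; rfl
  refine ⟨hH.eigenvalues, u, hA.eigenvalues_nonneg, ?_, ?_, ?_, ?_⟩
  · -- trace
    have h1 : A.trace = (Matrix.diagonal ((↑) ∘ hH.eigenvalues : I → ℂ)).trace := by
      conv_lhs => rw [hH.spectral_theorem, Unitary.conjStarAlgAut_apply]
      rw [Matrix.trace_mul_cycle,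
        (Matrix.mem_unitaryGroup_iff').mp hH.eigenvectorUnitary.2, Matrix.one_mul]
      rfl
    rw [h1, Matrix.trace_diagonal]
    push_cast
    rfl
  · intro i
    have h1 := hH.eigenvectorBasis.orthonormal.1 i
    have h2 : ‖hH.eigenvectorBasis i‖ ^ 2 = 1 := by rw [h1]; norm_num
    rw [EuclideanSpace.norm_eq, Real.sq_sqrt (Finset.sum_nonneg fun _ _ => sq_nonneg _)] at h2
    calc ∑ a, Complex.normSq (u i a) = ∑ a, ‖(hH.eigenvectorBasis i) a‖ ^ 2 :=
          Finset.sum_congr rfl fun a _ => by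
            rw [Complex.normSq_eq_norm_sq]
      _ = 1 := h2
  · intro i a hμ hrow
    have h3 : (Matrix.mulVec A (u i)) a = hH.eigenvalues i • u i a := by
      rw [hu, hH.mulVec_eigenvectorBasis]; rfl
    rw [Matrix.mulVec, dotProduct] at h3
    simp only [hrow, zero_mul, Finset.sum_const_zero] at h3
    have h4 : (hH.eigenvalues i : ℂ) * u i a = 0 := by
      rw [← Complex.real_smul, ← h3]
    rcases mul_eq_zero.mp h4 with h | h
    · exact absurd (by exact_mod_cast h) hμ
    · exact h
  · ext a b
    rw [key a b, Matrix.sum_apply]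
    refine Finset.sum_congr rfl fun j _ => ?_
    simp [Matrix.smul_apply, smul_eq_mul]

/-- paper's Proposition 2: a state of an `N`-fermion system with
respect to the bipartition into one mode and the rest (sector `k : Fin 2` recording
the occupation of the first mode) is a convex combination of rank-one projections
onto unit vectors each supported in a single sector if and only if all off-diagonal
entries between the two sectors vanish. -/
theorem one_mode_bipartition_separability
    {J₀ J₁ : Type*} [Fintype J₀] [Nonempty J₀] [Fintype J₁] [Nonempty J₁]
    (ρ : Matrix (Fin 2 × (J₀ ⊕ J₁)) (Fin 2 × (J₀ ⊕ J₁)) ℂ)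
    (hpsd : ρ.PosSemidef) (htr : ρ.trace = 1)
    (hsupp : ∀ (k l : Fin 2) (σ τ : J₀ ⊕ J₁),
      ρ (k, σ) (l, τ) ≠ 0 → inSector k σ ∧ inSector l τ) :
    (∃ (n : ℕ) (lam : Fin n → ℝ) (v : Fin n → (Fin 2 × (J₀ ⊕ J₁)) → ℂ),
      (∀ t, 0 ≤ lam t) ∧ (∑ t, lam t = 1) ∧
      (∀ t, ∑ a, Complex.normSq (v t a) = 1) ∧
      (∀ t, ∃ k : Fin 2, ∀ a : Fin 2 × (J₀ ⊕ J₁),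
        v t a ≠ 0 → a.1 = k ∧ inSector k a.2) ∧
      ρ = ∑ t, (lam t : ℂ) • Matrix.of (fun a b => v t a * starRingEnd ℂ (v t b)))
    ↔ (∀ σ τ : J₀ ⊕ J₁, ρ (0, σ) (1, τ) = 0) := by
  classical
  constructor
  · rintro ⟨n, lam, v, hpos, hsum, hnorm, hsec, hrep⟩ σ τ
    rw [hrep, Matrix.sum_apply]
    refine Finset.sum_eq_zero fun t _ => ?_
    simp only [Matrix.smul_apply, Matrix.of_apply, smul_eq_mul]
    obtain ⟨k, hk⟩ := hsec t
    by_cases h0 : v t (0, σ) = 0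
    · rw [h0]; ring
    by_cases h1 : v t (1, τ) = 0
    · rw [h1]; simp
    have e0 : (0 : Fin 2) = k := (hk _ h0).1
    have e1 : (1 : Fin 2) = k := (hk _ h1).1
    exact absurd (e0.trans e1.symm) (by decide)
  · intro hη
    have hherm := hpsd.isHermitian
    have hcross : ∀ (a b : Fin 2 × (J₀ ⊕ J₁)), a.1 ≠ b.1 → ρ a b = 0 := by
      rintro ⟨ka, σ⟩ ⟨kb, τ⟩ hne
      simp only at hne
      rcases (by decide : ∀ x : Fin 2, x = 0 ∨ x = 1) ka with h | h <;>
        rcases (by decide : ∀ x : Fin 2, x = 0 ∨ x = 1) kb with h' | h' <;>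
          subst h <;> subst h'
      · exact absurd rfl hne
      · exact hη σ τ
      · have := hherm.apply (1, σ) (0, τ)
        rw [← this, hη, star_zero]
      · exact absurd rfl hne
    set d : Fin 2 → (Fin 2 × (J₀ ⊕ J₁)) → ℂ :=
      fun k a => if a.1 = k ∧ inSector k a.2 then 1 else 0 with hd
    set A : Fin 2 → Matrix (Fin 2 × (J₀ ⊕ J₁)) (Fin 2 × (J₀ ⊕ J₁)) ℂ :=
      fun k => Matrix.diagonal (d k) * ρ * Matrix.diagonal (d k) with hA
    have hDH : ∀ k, (Matrix.diagonal (d k)).conjTranspose = Matrix.diagonal (d k) := by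
      intro k
      ext a b
      rw [Matrix.conjTranspose_apply]
      rcases eq_or_ne a b with rfl | hne
      · simp only [Matrix.diagonal_apply_eq, hd]
        rw [apply_ite (star : ℂ → ℂ), star_one, star_zero]
      · rw [Matrix.diagonal_apply_ne _ hne.symm, Matrix.diagonal_apply_ne _ hne, star_zero]
    have hApsd : ∀ k, (A k).PosSemidef := by
      intro k
      have := hpsd.conjTranspose_mul_mul_same (Matrix.diagonal (d k))
      rwa [hDH] at this
    have hAent : ∀ k a b, A k a b = d k a * ρ a b * d k b := by
      intro k a b
      rw [hA]
      simp only [Matrix.mul_diagonal, Matrix.diagonal_mul]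
    have hrowzero : ∀ k a, ¬(a.1 = k ∧ inSector k a.2) → ∀ b, A k a b = 0 := by
      intro k a h b
      rw [hAent, hd]
      simp only [if_neg h, zero_mul]
    have hsplit : ρ = A 0 + A 1 := by
      ext a b
      rw [Matrix.add_apply, hAent, hAent]
      by_cases hρ : ρ a b = 0
      · rw [hρ]; ring
      obtain ⟨sa, sb⟩ := hsupp a.1 b.1 a.2 b.2 hρ
      have hk : a.1 = b.1 := by
        by_contra hne; exact hρ (hcross a b hne)
      rcases (by decide : ∀ x : Fin 2, x = 0 ∨ x = 1) a.1 with h | h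
      · have da : d 0 a = 1 := if_pos ⟨h, h ▸ sa⟩
        have db : d 0 b = 1 := if_pos ⟨hk ▸ h, (hk ▸ h : b.1 = 0) ▸ sb⟩
        have da' : d 1 a = 0 := if_neg (fun hc => by rw [h] at hc; exact absurd hc.1 (by decide))
        rw [da, db, da']
        ring
      · have da : d 1 a = 1 := if_pos ⟨h, h ▸ sa⟩
        have db : d 1 b = 1 := if_pos ⟨hk ▸ h, (hk ▸ h : b.1 = 1) ▸ sb⟩
        have da' : d 0 a = 0 := if_neg (fun hc => by rw [h] at hc; exact absurd hc.1 (by decide))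
        rw [da, db, da']
        ring
    obtain ⟨μ₀, w₀, hμ₀, htr₀, hn₀, hs₀, hA₀⟩ := psd_decomp _ (hApsd 0)
    obtain ⟨μ₁, w₁, hμ₁, htr₁, hn₁, hs₁, hA₁⟩ := psd_decomp _ (hApsd 1)
    have htrace : (∑ i, μ₀ i) + (∑ i, μ₁ i) = 1 := by
      have hc : (((∑ i, μ₀ i) + (∑ i, μ₁ i) : ℝ) : ℂ) = 1 := by
        rw [Complex.ofReal_add, htr₀, htr₁, ← Matrix.trace_add, ← hsplit, htr]
      exact_mod_cast hc
    set base : Fin 2 → Fin 2 × (J₀ ⊕ J₁) := fun k =>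
      if k = 0 then ((0 : Fin 2), Sum.inl (Classical.arbitrary J₀))
      else ((1 : Fin 2), Sum.inr (Classical.arbitrary J₁)) with hbase
    set e : Fin 2 → (Fin 2 × (J₀ ⊕ J₁)) → ℂ := fun k => Pi.single (base k) 1 with he
    have hebase : ∀ k, ∑ a, Complex.normSq (e k a) = 1 := by
      intro k
      rw [he]
      simp only [Pi.single_apply, apply_ite Complex.normSq, map_one, map_zero]
      rw [Finset.sum_ite_eq' Finset.univ (base k) (fun _ => (1:ℝ))]
      simp
    have hesec : ∀ k a, e k a ≠ 0 → a.1 = k ∧ inSector k a.2 := by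
      intro k a h
      have ha : a = base k := by
        by_contra hne
        exact h (Pi.single_eq_of_ne hne 1)
      subst ha
      rcases (by decide : ∀ x : Fin 2, x = 0 ∨ x = 1) k with hk | hk <;> subst hk <;>
        simp [hbase, inSector]
    set V : ((Fin 2 × (J₀ ⊕ J₁)) ⊕ (Fin 2 × (J₀ ⊕ J₁))) → (Fin 2 × (J₀ ⊕ J₁)) → ℂ :=
      Sum.elim (fun i => if μ₀ i = 0 then e 0 else w₀ i)
        (fun i => if μ₁ i = 0 then e 1 else w₁ i) with hV
    set Λ : ((Fin 2 × (J₀ ⊕ J₁)) ⊕ (Fin 2 × (J₀ ⊕ J₁))) → ℝ := Sum.elim μ₀ μ₁ with hΛ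
    set Eq := Fintype.equivFin ((Fin 2 × (J₀ ⊕ J₁)) ⊕ (Fin 2 × (J₀ ⊕ J₁))) with hEq
    refine ⟨_, fun t => Λ (Eq.symm t), fun t => V (Eq.symm t), ?_, ?_, ?_, ?_, ?_⟩
    · intro t
      show 0 ≤ Λ (Eq.symm t)
      generalize Eq.symm t = s
      rcases s with i | i
      · exact hμ₀ i
      · exact hμ₁ i
    · show ∑ t, Λ (Eq.symm t) = 1
      rw [Equiv.sum_comp Eq.symm Λ, hΛ, Fintype.sum_sum_type]
      simp only [Sum.elim_inl, Sum.elim_inr]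
      exact htrace
    · intro t
      show ∑ a, Complex.normSq (V (Eq.symm t) a) = 1
      generalize Eq.symm t = s
      rcases s with i | i <;> simp only [hV, Sum.elim_inl, Sum.elim_inr]
      · by_cases h : μ₀ i = 0
        · rw [if_pos h]; exact hebase 0
        · rw [if_neg h]; exact hn₀ i
      · by_cases h : μ₁ i = 0
        · rw [if_pos h]; exact hebase 1
        · rw [if_neg h]; exact hn₁ i
    · intro t
      show ∃ k, ∀ a, V (Eq.symm t) a ≠ 0 → a.1 = k ∧ inSector k a.2
      generalize Eq.symm t = s
      rcases s with i | i
      · refine ⟨0, fun a ha => ?_⟩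
        simp only [hV, Sum.elim_inl] at ha
        by_cases h : μ₀ i = 0
        · rw [if_pos h] at ha; exact hesec 0 a ha
        · rw [if_neg h] at ha
          by_contra hbad
          exact ha (hs₀ i a h (hrowzero 0 a hbad))
      · refine ⟨1, fun a ha => ?_⟩
        simp only [hV, Sum.elim_inr] at ha
        by_cases h : μ₁ i = 0
        · rw [if_pos h] at ha; exact hesec 1 a ha
        · rw [if_neg h] at ha
          by_contra hbad
          exact ha (hs₁ i a h (hrowzero 1 a hbad))
    · have h0 : ∀ i, ((Λ (Sum.inl i) : ℝ) : ℂ) •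
          Matrix.of (fun a b => V (Sum.inl i) a * starRingEnd ℂ (V (Sum.inl i) b)) =
          ((μ₀ i : ℝ) : ℂ) • Matrix.of (fun a b => w₀ i a * starRingEnd ℂ (w₀ i b)) := by
        intro i
        rw [hΛ, hV]
        dsimp only [Sum.elim_inl]
        by_cases h : μ₀ i = 0
        · rw [h, if_pos rfl]; simp
        · rw [if_neg h]
      have h1 : ∀ i, ((Λ (Sum.inr i) : ℝ) : ℂ) •
          Matrix.of (fun a b => V (Sum.inr i) a * starRingEnd ℂ (V (Sum.inr i) b)) =
          ((μ₁ i : ℝ) : ℂ) • Matrix.of (fun a b => w₁ i a * starRingEnd ℂ (w₁ i b)) := by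
        intro i
        rw [hΛ, hV]
        dsimp only [Sum.elim_inr]
        by_cases h : μ₁ i = 0
        · rw [h, if_pos rfl]; simp
        · rw [if_neg h]
      show ρ = ∑ t, ((Λ (Eq.symm t) : ℝ) : ℂ) •
          Matrix.of (fun a b => V (Eq.symm t) a * starRingEnd ℂ (V (Eq.symm t) b))
      rw [Equiv.sum_comp Eq.symm (fun s => ((Λ s : ℝ) : ℂ) •
        Matrix.of (fun a b => V s a * starRingEnd ℂ (V s b))), Fintype.sum_sum_type]
      rw [hsplit, hA₀, hA₁]
      congr 1
      · exact Finset.sum_congr rfl fun i _ => (h0 i).symm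
      · exact Finset.sum_congr rfl fun i _ => (h1 i).symm
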